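/- Let n ≥ 5 and 1 ≤ k < n/2. Then the generalized Petersen graph P(n, k) is potentially triangulable in the convex complete graph K_{2n}. -/

import Mathlib

namespace ConvexTri

/-- `x` lies strictly inside the open arc from `a` to `b` (in the positive cyclic direction). -/
def InOpenArc (n : ℕ) (a b x : ZMod n) : Prop :=
  0 < (x - a).val ∧ (x - a).val < (b - a).val

/-- Two chords of the convex `n`-gon cross: the endpoints of one separate the endpoints of
the other on the cycle, i.e. exactly one endpoint of the second chord lies in each of the two
open arcs determined by the endpoints of the first chord. -/
def Cross (n : ℕ) (e f : Sym2 (ZMod n)) : Prop :=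
  ∃ a b c d : ZMod n, e = s(a, b) ∧ f = s(c, d) ∧
    InOpenArc n a b c ∧ InOpenArc n b a d

/-- Boundary edge of the convex `n`-gon. -/
def IsBoundary (n : ℕ) (e : Sym2 (ZMod n)) : Prop :=
  ∃ i : ZMod n, e = s(i, i + 1)

/-- A diagonal: an edge of `K_n` (a pair of distinct vertices) that is not a boundary edge. -/
def IsDiagonal (n : ℕ) (e : Sym2 (ZMod n)) : Prop :=
  ¬ e.IsDiag ∧ ¬ IsBoundary n e

/-- `K_n - F` admits a triangulation: `F` contains no boundary edge and there is a set of
`n - 3` pairwise non-crossing diagonals disjoint from `F`. -/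
def AdmitsTriangulation (n : ℕ) (F : Finset (Sym2 (ZMod n))) : Prop :=
  (∀ e ∈ F, ¬ IsBoundary n e) ∧
  ∃ T : Finset (Sym2 (ZMod n)), T.card = n - 3 ∧
    (∀ e ∈ T, IsDiagonal n e) ∧
    (∀ e ∈ T, ∀ f ∈ T, ¬ Cross n e f) ∧
    (∀ e ∈ T, e ∉ F)

/-- Degree of a vertex in an edge set. -/
def deg (n : ℕ) (F : Finset (Sym2 (ZMod n))) (v : ZMod n) : ℕ :=
  (F.filter (fun e => v ∈ e)).card

/-- A pendant vertex of `F` is a vertex of degree 1. -/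
def Pendant (n : ℕ) (F : Finset (Sym2 (ZMod n))) (v : ZMod n) : Prop :=
  deg n F v = 1

/-- `F` has no isolated vertices. -/
def NoIsolated (n : ℕ) (F : Finset (Sym2 (ZMod n))) : Prop :=
  ∀ v : ZMod n, 0 < deg n F v

/-- A relabeling of the vertices by a rotation and possibly a reflection of the cyclic order. -/
def IsDihedral (n : ℕ) (φ : ZMod n → ZMod n) : Prop :=
  (∃ c : ZMod n, φ = fun x => c + x) ∨ (∃ c : ZMod n, φ = fun x => c - x)

/-- The explicit shape of the configuration `F_n(*)` (before relabeling). -/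
def FStarShape (n : ℕ) (F : Finset (Sym2 (ZMod n))) : Prop :=
  F = (Finset.image (fun i : ℕ => s((0 : ZMod n), (i : ZMod n))) (Finset.Icc 2 (n - 2))) ∪
      {s((1 : ZMod n), (-1 : ZMod n))} ∨
  ∃ k : ℕ, 2 ≤ k ∧ k ≤ n - 4 ∧
    (∀ i : ℕ, i < k → 2 ≤ deg n F (i : ZMod n) ∧
      s((i : ZMod n) - 1, (i : ZMod n) + 1) ∈ F) ∧
    (∀ i : ℕ, k ≤ i → i ≤ n - 1 → deg n F (i : ZMod n) = 1 ∧
      ∀ w : ZMod n, s((i : ZMod n), w) ∈ F → ¬ Pendant n F w) ∧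
    (∀ u v i j : ZMod n, Pendant n F u → Pendant n F v →
      s(u, i) ∈ F → s(v, j) ∈ F → Cross n s(u, i) s(v, j) → i = j + 1 ∨ j = i + 1)

/-- `F` has the configuration `F_n(*)`. -/
def IsFStar (n : ℕ) (F : Finset (Sym2 (ZMod n))) : Prop :=
  (∀ e ∈ F, ¬ e.IsDiag) ∧ NoIsolated n F ∧ F.card = n - 2 ∧
  ∃ φ : ZMod n → ZMod n, IsDihedral n φ ∧ FStarShape n (F.image (Sym2.map φ))

/-- Relabeling map after deleting the vertex `i`: the remaining `n - 1` vertices in their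
induced cyclic order. -/
def delMap (n : ℕ) (i : ZMod n) (x : ZMod n) : ZMod (n - 1) :=
  (((x - i).val - 1 : ℕ) : ZMod (n - 1))

/-- `F` with the vertex `i` deleted, as an edge set on the remaining `n - 1` vertices
in their induced cyclic order. -/
def delete (n : ℕ) (F : Finset (Sym2 (ZMod n))) (i : ZMod n) :
    Finset (Sym2 (ZMod (n - 1))) :=
  (F.filter (fun e => i ∉ e)).image (Sym2.map (delMap n i))

/-- `F` has the configuration `J_n(*)`. -/
def IsJStar (n : ℕ) (F : Finset (Sym2 (ZMod n))) : Prop :=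
  (∀ e ∈ F, ¬ e.IsDiag) ∧ NoIsolated n F ∧ F.card = n - 1 ∧
  (∀ i : ZMod n, s(i - 1, i + 1) ∉ F → deg n F i ≤ 2) ∧
  (∀ i : ZMod n, s(i - 1, i + 1) ∉ F → deg n F i = 2 → IsFStar (n - 1) (delete n F i))

/-- `J_{n,k}`: the set of vertices `v_i` of degree `k` in `F` with `v_{i-1}v_{i+1} ∉ F`. -/
def Jset (n k : ℕ) (F : Finset (Sym2 (ZMod n))) : Set (ZMod n) :=
  {i | deg n F i = k ∧ s(i - 1, i + 1) ∉ F}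

/-- `F` is a configuration `J_n(*)` of Type-1. -/
def IsJStarType1 (n : ℕ) (F : Finset (Sym2 (ZMod n))) : Prop :=
  IsJStar n F ∧ Jset n 2 F = ∅ ∧ ∃ e ∈ F, IsFStar n (F.erase e)

/-- `F` is a configuration `J_n(*)` of Type-2. -/
def IsJStarType2 (n : ℕ) (F : Finset (Sym2 (ZMod n))) : Prop :=
  IsJStar n F ∧ (Jset n 2 F).Nonempty ∧
  ∀ i ∈ Jset n 2 F, ∀ j₁ j₂ t w : ZMod n,
    s(i, j₁) ∈ F → s(i, j₂) ∈ F → j₁ ≠ j₂ →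
    Pendant n F t → s(t, w) ∈ F →
    Cross n s(t, w) s(i, j₁) → Cross n s(t, w) s(i, j₂) →
    j₁ = w + 1 ∨ w = j₁ + 1 ∨ j₂ = w + 1 ∨ w = j₂ + 1

/-- A Hamiltonian cycle of the convex complete graph `K_n`, as an edge set. -/
def IsHamCycle (n : ℕ) (H : Finset (Sym2 (ZMod n))) : Prop :=
  ∃ g : ZMod n ≃ ZMod n,
    H = Finset.image (fun i : ℕ => s(g (i : ZMod n), g ((i : ZMod n) + 1)))
      (Finset.range n) ∧ H.card = n

/-- A graph `G` is potentially triangulable in `K_n` if its vertices can be placed injectively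
on the vertices of `K_n` so that `K_n` minus the image of the edge set of `G` admits a
triangulation. -/
def PotentiallyTriangulable {V : Type*} (G : SimpleGraph V) (n : ℕ) : Prop :=
  ∃ f : V → ZMod n, Function.Injective f ∧
    ∃ F' : Finset (Sym2 (ZMod n)),
      (F' : Set (Sym2 (ZMod n))) = Sym2.map f '' G.edgeSet ∧
      AdmitsTriangulation n F'


/-- The generalized Petersen graph `P(n, k)`, with outer vertices `.inl i = a_i` and inner
vertices `.inr i = b_i`. -/
def petersen (n k : ℕ) : SimpleGraph (ZMod n ⊕ ZMod n) :=
  SimpleGraph.fromRel fun x y =>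
    (∃ i : ZMod n, x = Sum.inl i ∧ y = Sum.inl (i + 1)) ∨
    (∃ i : ZMod n, x = Sum.inr i ∧ y = Sum.inr (i + (k : ZMod n))) ∨
    (∃ i : ZMod n, x = Sum.inl i ∧ y = Sum.inr i)


/-! ### Auxiliary development -/

section Aux

open Finset

instance (n : ℕ) (a b x : ZMod n) : Decidable (InOpenArc n a b x) :=
  inferInstanceAs (Decidable (_ ∧ _))

lemma cross_iff (n : ℕ) (a b c d : ZMod n) :
    Cross n s(a, b) s(c, d) ↔
      (InOpenArc n a b c ∧ InOpenArc n b a d) ∨ (InOpenArc n a b d ∧ InOpenArc n b a c) := by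
  constructor
  · rintro ⟨a', b', c', d', he, hf, h1, h2⟩
    rcases Sym2.eq_iff.mp he with ⟨rfl, rfl⟩ | ⟨rfl, rfl⟩ <;>
      rcases Sym2.eq_iff.mp hf with ⟨rfl, rfl⟩ | ⟨rfl, rfl⟩ <;> tauto
  · rintro (⟨h1, h2⟩ | ⟨h1, h2⟩)
    · exact ⟨a, b, c, d, rfl, rfl, h1, h2⟩
    · exact ⟨a, b, d, c, rfl, Sym2.eq_swap, h1, h2⟩

instance (n : ℕ) [NeZero n] (e : Sym2 (ZMod n)) : Decidable (IsBoundary n e) :=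
  inferInstanceAs (Decidable (∃ _, _))

instance (n : ℕ) [NeZero n] (e : Sym2 (ZMod n)) : Decidable (IsDiagonal n e) :=
  inferInstanceAs (Decidable (_ ∧ _))

instance petersenDecAdj (n k : ℕ) [NeZero n] : DecidableRel (petersen n k).Adj := fun x y =>
  decidable_of_iff _ (SimpleGraph.fromRel_adj _ x y).symm

/-- value of a subtraction in `ZMod N`. -/
lemma sub_val {N : ℕ} [NeZero N] (u v : ZMod N) :
    (u - v).val = (u.val + (N - v.val)) % N := by
  rcases eq_or_ne v 0 with rfl | hv
  · simp [Nat.mod_eq_of_lt (ZMod.val_lt u), Nat.add_mod_right]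
  · rw [sub_eq_add_neg, ZMod.val_add, ZMod.neg_val, if_neg hv]

lemma val_cast_lt {N : ℕ} [NeZero N] {m : ℕ} (h : m < N) : ((m : ZMod N)).val = m := by
  rw [ZMod.val_natCast, Nat.mod_eq_of_lt h]

lemma cast_ne_zero_of {N : ℕ} [NeZero N] {m : ℕ} (h0 : 0 < m) (h : m < N) :
    (m : ZMod N) ≠ 0 := by
  intro hc
  have := val_cast_lt h
  rw [hc, ZMod.val_zero] at this
  omega

lemma neg_cast_val {N : ℕ} [NeZero N] {m : ℕ} (h0 : 0 < m) (h : m < N) :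
    (-(m : ZMod N)).val = N - m := by
  rw [ZMod.neg_val, if_neg (cast_ne_zero_of h0 h), val_cast_lt h]

lemma par_cast (n : ℕ) [NeZero (2*n)] (a : ℕ) : (((a : ℕ) : ZMod (2*n))).val % 2 = a % 2 := by
  rw [ZMod.val_natCast, Nat.mod_mod_of_dvd a ⟨n, rfl⟩]

lemma cast_wrap {N : ℕ} [NeZero N] (a b : ℕ) (h : b ≤ a + N) :
    ((a + N - b : ℕ) : ZMod N) = (a : ZMod N) - (b : ZMod N) := by
  have h2 : ((a + N - b : ℕ) : ZMod N) + (b : ZMod N) = ((a + N : ℕ) : ZMod N) := by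
    rw [← Nat.cast_add]
    congr 1
    omega
  have h3 : ((a + N : ℕ) : ZMod N) = (a : ZMod N) := by
    push_cast [ZMod.natCast_self]
    ring
  rw [h3] at h2
  linear_combination h2

/-- Two crossing chords have no common endpoint. -/
lemma cross_shared {n : ℕ} {e f : Sym2 (ZMod n)} (h : Cross n e f) (x : ZMod n)
    (hx : x ∈ e) (hx' : x ∈ f) : False := by
  obtain ⟨a, b, c, d, he, hf, ⟨h1, h2⟩, ⟨h3, h4⟩⟩ := h
  subst he hf
  have hca : c ≠ a := by rintro rfl; simp at h1
  have hcb : c ≠ b := by rintro rfl; exact absurd h2 (lt_irrefl _)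
  have hdb : d ≠ b := by rintro rfl; simp at h3
  have hda : d ≠ a := by rintro rfl; exact absurd h4 (lt_irrefl _)
  rcases Sym2.mem_iff.mp hx with rfl | rfl <;> rcases Sym2.mem_iff.mp hx' with h' | h' <;>
    simp_all

/-- Anything crossing a "short" chord (arc length 2) passes through the midpoint. -/
lemma cross_two {N : ℕ} [NeZero N] {u v : ZMod N} {g : Sym2 (ZMod N)}
    (h : Cross N s(u, v) g) (h2 : (v - u).val = 2) : u + 1 ∈ g := by
  have hN : 2 < N := h2 ▸ ZMod.val_lt (v - u)
  have hone : (1 : ZMod N).val = 1 := by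
    rw [← Nat.cast_one, val_cast_lt (by omega)]
  obtain ⟨a, b, c, d, he, hf, ⟨h1a, h1b⟩, ⟨h2a, h2b⟩⟩ := h
  have key : ∀ w : ZMod N, 0 < (w - u).val → (w - u).val < (v - u).val → w = u + 1 := by
    intro w hw1 hw2
    rw [h2] at hw2
    have : (w - u).val = (1 : ZMod N).val := by omega
    have := ZMod.val_injective _ this
    rw [sub_eq_iff_eq_add] at this
    rw [this, add_comm]
  rcases Sym2.eq_iff.mp he with ⟨rfl, rfl⟩ | ⟨rfl, rfl⟩
  · have := key c h1a h1b
    rw [hf, this]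
    simp
  · have := key d h2a h2b
    rw [hf, this]
    simp

lemma cross_symm {N : ℕ} [NeZero N] {e f : Sym2 (ZMod N)} (h : Cross N e f) :
    Cross N f e := by
  obtain ⟨a, b, c, d, he, hf, ⟨h1, h2⟩, ⟨h3, h4⟩⟩ := h
  set c1 := (c - a).val with hc1
  set b1 := (b - a).val with hb1
  set d1 := (d - a).val with hd1
  have hbN : b1 < N := ZMod.val_lt _
  have hcN : c1 < N := ZMod.val_lt _
  have hdN : d1 < N := ZMod.val_lt _
  have hba : b - a ≠ 0 := by
    intro h0
    have hb0 : b1 = 0 := by rw [hb1, h0, ZMod.val_zero]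
    omega
  have hab : (a - b).val = N - b1 := by
    have hrw : a - b = -(b - a) := by ring
    rw [hrw, ZMod.neg_val, if_neg hba]
  have hdb : (d - b).val = (d1 + (N - b1)) % N := by
    have hrw : d - b = (d - a) - (b - a) := by ring
    rw [hrw, sub_val]
  have hbd : b1 < d1 := by
    rw [hdb] at h3 h4
    rw [hab] at h4
    rcases Nat.lt_or_ge d1 b1 with hlt | hge
    · rw [Nat.mod_eq_of_lt (by omega)] at h4
      omega
    · rcases Nat.eq_or_lt_of_le hge with heq | hlt2
      · have : d1 + (N - b1) = N := by omega
        rw [this, Nat.mod_self] at h3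
        omega
      · omega
  have hbc : (b - c).val = b1 - c1 := by
    have hrw : b - c = (b - a) - (c - a) := by ring
    rw [hrw, sub_val, ← hb1, ← hc1]
    have : b1 + (N - c1) = N + (b1 - c1) := by omega
    rw [this, Nat.add_mod_left, Nat.mod_eq_of_lt (by omega)]
  have hdc : (d - c).val = d1 - c1 := by
    have hrw : d - c = (d - a) - (c - a) := by ring
    rw [hrw, sub_val, ← hd1, ← hc1]
    have : d1 + (N - c1) = N + (d1 - c1) := by omega
    rw [this, Nat.add_mod_left, Nat.mod_eq_of_lt (by omega)]
  have hda : d - a ≠ 0 := by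
    intro h0
    have hd0 : d1 = 0 := by rw [hd1, h0, ZMod.val_zero]
    omega
  have had : (a - d).val = N - d1 := by
    have hrw : a - d = -(d - a) := by ring
    rw [hrw, ZMod.neg_val, if_neg hda]
  have hcd : (c - d).val = c1 + (N - d1) := by
    have hrw : c - d = (c - a) - (d - a) := by ring
    rw [hrw, sub_val, ← hc1, ← hd1, Nat.mod_eq_of_lt (by omega)]
  refine ⟨c, d, b, a, hf, by rw [he]; exact Sym2.eq_swap, ⟨?_, ?_⟩, ⟨?_, ?_⟩⟩
  · rw [hbc]; omega
  · rw [hbc, hdc]; omega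
  · rw [had]; omega
  · rw [had, hcd]; omega

end Aux


section Master

open Finset

/-- The key condition on the placement of an edge. -/
def Ok (n : ℕ) (u v : ZMod (2*n)) : Prop :=
  ((v - u).val ≠ 1 ∧ (u - v).val ≠ 1) ∧
  (u.val % 2 = 0 → v.val % 2 = 0 →
    ((v - u).val ≠ 2 ∧ (u - v).val ≠ 2 ∧ u ≠ 0 ∧ v ≠ 0))

instance (n : ℕ) (u v : ZMod (2*n)) : Decidable (Ok n u v) :=
  inferInstanceAs (Decidable (_ ∧ _))

lemma ok_symm {n : ℕ} {u v : ZMod (2*n)} (h : Ok n u v) : Ok n v u := by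
  unfold Ok at h ⊢
  tauto

lemma ok_mixed {n : ℕ} [NeZero (2*n)] {u v : ZMod (2*n)} (m : ℕ)
    (hv : v - u = ((m : ℕ) : ZMod (2*n))) (hmN : m < 2*n)
    (h1 : m ≠ 1) (h2 : 2*n - m ≠ 1)
    (hodd : u.val % 2 = 1 ∨ v.val % 2 = 1) : Ok n u v := by
  have huv : u - v = -((m : ℕ) : ZMod (2*n)) := by rw [← hv]; ring
  have hval1 : (v - u).val = m := by rw [hv, val_cast_lt hmN]
  have hval2 : (u - v).val = if m = 0 then 0 else 2*n - m := by
    rcases eq_or_ne m 0 with rfl | hm0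
    · simp [huv]
    · rw [huv, neg_cast_val (by omega) hmN, if_neg hm0]
  refine ⟨⟨by omega, ?_⟩, ?_⟩
  · rw [hval2]
    split <;> omega
  · intro hue hve
    rcases hodd with h | h <;> omega

lemma ok_even {n : ℕ} [NeZero (2*n)] {u v : ZMod (2*n)} (m : ℕ)
    (hv : v - u = ((m : ℕ) : ZMod (2*n))) (hmN : m < 2*n)
    (h1 : m ≠ 1) (h2 : 2*n - m ≠ 1) (h3 : m ≠ 2) (h4 : 2*n - m ≠ 2) (h5 : m ≠ 0)
    (hu0 : u ≠ 0) (hv0 : v ≠ 0) : Ok n u v := by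
  have huv : u - v = -((m : ℕ) : ZMod (2*n)) := by rw [← hv]; ring
  have hval1 : (v - u).val = m := by rw [hv, val_cast_lt hmN]
  have hval2 : (u - v).val = 2*n - m := by
    rw [huv, neg_cast_val (by omega) hmN]
  exact ⟨⟨by omega, by omega⟩, fun _ _ => ⟨by omega, by omega, hu0, hv0⟩⟩

lemma mem_image_edge {V : Type*} [Fintype V] [DecidableEq V] (G : SimpleGraph V)
    [DecidableRel G.Adj] {N : ℕ} (f : V → ZMod N) {e : Sym2 (ZMod N)}
    (he : e ∈ G.edgeFinset.image (Sym2.map f)) :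
    ∃ x y, G.Adj x y ∧ e = s(f x, f y) := by
  obtain ⟨E, hE, rfl⟩ := Finset.mem_image.mp he
  induction E with
  | _ x y =>
    exact ⟨x, y, SimpleGraph.mem_edgeFinset.mp hE, (Sym2.map_pair_eq f x y).symm⟩

/-- From an explicit triangulation avoiding the image of `G`, conclude potential
triangulability. -/
theorem master0 {V : Type*} [Fintype V] [DecidableEq V] (G : SimpleGraph V)
    [DecidableRel G.Adj] (N : ℕ) (f : V → ZMod N) (hinj : Function.Injective f)
    (T : Finset (Sym2 (ZMod N))) (hcard : T.card = N - 3)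
    (hdiag : ∀ e ∈ T, IsDiagonal N e)
    (hcross : ∀ e ∈ T, ∀ g ∈ T, ¬ Cross N e g)
    (hbd : ∀ x y, G.Adj x y → ¬ IsBoundary N s(f x, f y))
    (hnotT : ∀ x y, G.Adj x y → s(f x, f y) ∉ T) :
    PotentiallyTriangulable G N := by
  refine ⟨f, hinj, G.edgeFinset.image (Sym2.map f),
    by rw [Finset.coe_image, SimpleGraph.coe_edgeFinset], ?_, T, hcard, hdiag, hcross, ?_⟩
  · intro e he
    obtain ⟨x, y, hxy, rfl⟩ := mem_image_edge G f he
    exact hbd x y hxy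
  · intro e heT heF
    obtain ⟨x, y, hxy, rfl⟩ := mem_image_edge G f heF
    exact hnotT x y hxy heT

/-- The master lemma: a placement where every edge of `G` avoids boundary edges, "ears"
between even positions, and even positions adjacent to `0`, yields potential
triangulability (via the triangulation by all ears plus the fan at `0`). -/
theorem master {V : Type*} [Fintype V] [DecidableEq V] (G : SimpleGraph V)
    [DecidableRel G.Adj] (n : ℕ) (hn : 5 ≤ n) (f : V → ZMod (2*n))
    (hinj : Function.Injective f)
    (hOk : ∀ x y, G.Adj x y → Ok n (f x) (f y)) :
    PotentiallyTriangulable G (2*n) := by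
  haveI : NeZero (2*n) := ⟨by omega⟩
  -- the triangulation: ears + fan at 0
  set T : Finset (Sym2 (ZMod (2*n))) :=
    ((Finset.range n).image fun j => s(((2*j : ℕ) : ZMod (2*n)), ((2*j+2 : ℕ) : ZMod (2*n)))) ∪
    ((Finset.Icc 2 (n-2)).image fun j => s((0 : ZMod (2*n)), ((2*j : ℕ) : ZMod (2*n)))) with hT
  have memT : ∀ e ∈ T,
      (∃ j, j < n ∧ e = s(((2*j : ℕ) : ZMod (2*n)), ((2*j+2 : ℕ) : ZMod (2*n)))) ∨
      (∃ j, 2 ≤ j ∧ j ≤ n-2 ∧ e = s((0 : ZMod (2*n)), ((2*j : ℕ) : ZMod (2*n)))) := by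
    intro e he
    rw [hT, Finset.mem_union, Finset.mem_image, Finset.mem_image] at he
    rcases he with ⟨j, hj, rfl⟩ | ⟨j, hj, rfl⟩
    · exact Or.inl ⟨j, Finset.mem_range.mp hj, rfl⟩
    · obtain ⟨h1, h2⟩ := Finset.mem_Icc.mp hj
      exact Or.inr ⟨j, h1, h2, rfl⟩
  -- all vertices of T are "even"
  have evenT : ∀ e ∈ T, ∀ x ∈ e, x.val % 2 = 0 := by
    intro e he x hx
    rcases memT e he with ⟨j, hj, rfl⟩ | ⟨j, hj1, hj2, rfl⟩ <;>
      rcases Sym2.mem_iff.mp hx with rfl | rfl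
    · exact par_cast n (2*j) ▸ by omega
    · exact par_cast n (2*j+2) ▸ by omega
    · simp
    · exact par_cast n (2*j) ▸ by omega
  -- cardinality
  have cardT : T.card = 2*n - 3 := by
    rw [hT, Finset.card_union_of_disjoint, Finset.card_image_of_injOn,
      Finset.card_image_of_injOn, Finset.card_range, Nat.card_Icc]
    · omega
    · -- fan injective
      intro j hj j' hj' hEq
      rw [Finset.mem_coe, Finset.mem_Icc] at hj hj'
      simp only at hEq
      rcases Sym2.eq_iff.mp hEq with ⟨-, h2⟩ | ⟨h1, h2⟩
      · have := congrArg ZMod.val h2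
        rw [val_cast_lt (by omega), val_cast_lt (by omega)] at this
        omega
      · have := congrArg ZMod.val h1
        rw [ZMod.val_zero, val_cast_lt (by omega)] at this
        omega
    · -- ears injective
      intro j hj j' hj' hEq
      rw [Finset.mem_coe, Finset.mem_range] at hj hj'
      simp only at hEq
      rcases Sym2.eq_iff.mp hEq with ⟨h1, -⟩ | ⟨h1, h2⟩
      · have := congrArg ZMod.val h1
        rw [val_cast_lt (by omega), val_cast_lt (by omega)] at this
        omega
      · have e1 := congrArg ZMod.val h1
        have e2 := congrArg ZMod.val h2
        rw [val_cast_lt (by omega), ZMod.val_natCast] at e1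
        rw [ZMod.val_natCast, val_cast_lt (by omega)] at e2
        rcases Nat.lt_or_ge (2*j'+2) (2*n) with hlt | hge
        · rw [Nat.mod_eq_of_lt hlt] at e1
          rcases Nat.lt_or_ge (2*j+2) (2*n) with hlt2 | hge2
          · rw [Nat.mod_eq_of_lt hlt2] at e2
            omega
          · have h22 : 2*j+2 = 2*n := by omega
            rw [h22, Nat.mod_self] at e2
            omega
        · have h22 : 2*j'+2 = 2*n := by omega
          rw [h22, Nat.mod_self] at e1
          rw [Nat.mod_eq_of_lt (by omega)] at e2
          omega
    · -- disjoint
      rw [Finset.disjoint_left]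
      intro e he hf
      obtain ⟨j, hj, rfl⟩ := Finset.mem_image.mp he
      obtain ⟨i, hi, hEq⟩ := Finset.mem_image.mp hf
      rw [Finset.mem_range] at hj
      rw [Finset.mem_Icc] at hi
      rcases Sym2.eq_iff.mp hEq.symm with ⟨h1, h2⟩ | ⟨h1, h2⟩
      · have e1 := congrArg ZMod.val h1
        rw [ZMod.val_zero, val_cast_lt (by omega)] at e1
        have e2 := congrArg ZMod.val h2
        rw [val_cast_lt (by omega), val_cast_lt (by omega)] at e2
        omega
      · have e2 := congrArg ZMod.val h2
        rw [ZMod.val_zero, ZMod.val_natCast] at e2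
        have e1 := congrArg ZMod.val h1
        rw [val_cast_lt (by omega), val_cast_lt (by omega)] at e1
        rcases Nat.lt_or_ge (2*j+2) (2*n) with hlt | hge
        · rw [Nat.mod_eq_of_lt hlt] at e2
          omega
        · omega
  -- diagonality
  have hone : (1 : ZMod (2*n)).val = 1 := by
    rw [← Nat.cast_one, val_cast_lt (by omega)]
  have not_bdry : ∀ (u v : ZMod (2*n)), (v - u).val ≠ 1 → (u - v).val ≠ 1 →
      ¬ IsBoundary (2*n) s(u, v) := by
    rintro u v h1 h2 ⟨i, hi⟩
    rcases Sym2.eq_iff.mp hi with ⟨rfl, rfl⟩ | ⟨rfl, rfl⟩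
    · apply h1
      rw [add_sub_cancel_left, hone]
    · apply h2
      rw [add_sub_cancel_left, hone]
  have ear_diff : ∀ j : ℕ, (((2*j+2 : ℕ) : ZMod (2*n))) - (((2*j : ℕ) : ZMod (2*n))) =
      ((2 : ℕ) : ZMod (2*n)) := by
    intro j
    push_cast
    ring
  have hdiag : ∀ e ∈ T, IsDiagonal (2*n) e := by
    intro e he
    rcases memT e he with ⟨j, hj, rfl⟩ | ⟨j, hj1, hj2, rfl⟩
    · constructor
      · rw [Sym2.mk_isDiag_iff]
        intro hEq
        have := congrArg ZMod.val hEq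
        rw [val_cast_lt (by omega), ZMod.val_natCast] at this
        rcases Nat.lt_or_ge (2*j+2) (2*n) with hlt | hge
        · rw [Nat.mod_eq_of_lt hlt] at this; omega
        · have h22 : 2*j+2 = 2*n := by omega
          rw [h22, Nat.mod_self] at this; omega
      · apply not_bdry
        · rw [ear_diff j, val_cast_lt (by omega)]
          omega
        · have hrw : (((2*j : ℕ) : ZMod (2*n))) - (((2*j+2 : ℕ) : ZMod (2*n))) =
              -((2 : ℕ) : ZMod (2*n)) := by
            rw [← ear_diff j]; ring
          rw [hrw, neg_cast_val (by omega) (by omega)]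
          omega
    · constructor
      · rw [Sym2.mk_isDiag_iff]
        intro hEq
        have := congrArg ZMod.val hEq.symm
        rw [val_cast_lt (by omega), ZMod.val_zero] at this
        omega
      · apply not_bdry
        · rw [sub_zero, val_cast_lt (by omega)]
          omega
        · rw [zero_sub, neg_cast_val (by omega) (by omega)]
          omega
  -- non-crossing
  have earNoCross : ∀ j : ℕ, j < n → ∀ g ∈ T,
      ¬ Cross (2*n) (s(((2*j : ℕ) : ZMod (2*n)), ((2*j+2 : ℕ) : ZMod (2*n)))) g := by
    intro j hj g hg hC
    have h2 : ((((2*j+2 : ℕ) : ZMod (2*n))) - (((2*j : ℕ) : ZMod (2*n)))).val = 2 := by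
      rw [ear_diff j, val_cast_lt (by omega)]
    have hmem := cross_two hC h2
    have heq : (((2*j : ℕ) : ZMod (2*n))) + 1 = (((2*j+1 : ℕ) : ZMod (2*n))) := by
      push_cast
      ring
    have hpar := evenT g hg _ hmem
    rw [heq, par_cast n (2*j+1)] at hpar
    omega
  have hcross : ∀ e ∈ T, ∀ g ∈ T, ¬ Cross (2*n) e g := by
    intro e he g hg hC
    rcases memT e he with ⟨j, hj, hEq⟩ | ⟨j, hj1, hj2, hEq⟩
    · exact earNoCross j hj g hg (hEq ▸ hC)
    · rcases memT g hg with ⟨i, hi, hEq'⟩ | ⟨i, hi1, hi2, hEq'⟩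
      · exact earNoCross i hi e he (hEq' ▸ (cross_symm hC))
      · refine cross_shared hC 0 ?_ ?_
        · rw [hEq]; exact Sym2.mem_iff.mpr (Or.inl rfl)
        · rw [hEq']; exact Sym2.mem_iff.mpr (Or.inl rfl)
  -- apply master0
  apply master0 G (2*n) f hinj T cardT hdiag hcross
  · intro x y hxy
    obtain ⟨⟨h1, h2⟩, -⟩ := hOk x y hxy
    exact not_bdry _ _ h1 h2
  · intro x y hxy heT
    obtain ⟨-, hok2⟩ := hOk x y hxy
    rcases memT _ heT with ⟨j, hj, hEq⟩ | ⟨j, hj1, hj2, hEq⟩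
    · rcases Sym2.eq_iff.mp hEq with ⟨ha, hb⟩ | ⟨ha, hb⟩
      · have h2 := hok2 (by rw [ha, par_cast n]; omega) (by rw [hb, par_cast n]; omega)
        apply h2.1
        rw [ha, hb, ear_diff j, val_cast_lt (by omega)]
      · have h2 := hok2 (by rw [ha, par_cast n]; omega) (by rw [hb, par_cast n]; omega)
        apply h2.2.1
        rw [ha, hb, ear_diff j, val_cast_lt (by omega)]
    · rcases Sym2.eq_iff.mp hEq with ⟨ha, hb⟩ | ⟨ha, hb⟩
      · have h2 := hok2 (by rw [ha]; simp) (by rw [hb, par_cast n]; omega)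
        exact h2.2.2.1 ha
      · have h2 := hok2 (by rw [ha, par_cast n]; omega) (by rw [hb]; simp)
        exact h2.2.2.2 hb

end Master


section Schemes

open Finset

instance twoNeZero (n : ℕ) [NeZero n] : NeZero (2*n) := ⟨fun h => (NeZero.ne n) (by omega)⟩

lemma neg_cast_eq {N : ℕ} [NeZero N] {m : ℕ} (h : m ≤ N) :
    -((m : ℕ) : ZMod N) = ((N - m : ℕ) : ZMod N) := by
  rw [Nat.cast_sub h, ZMod.natCast_self]
  ring

/-- The "double" embedding of positions. -/
def iota (n : ℕ) (i : ZMod n) : ZMod (2*n) := ((2 * i.val : ℕ) : ZMod (2*n))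

variable {n : ℕ} [NeZero n]

lemma iota_val (i : ZMod n) : (iota n i).val = 2 * i.val :=
  val_cast_lt (by have := ZMod.val_lt i; omega)

lemma iota_add (i j : ZMod n) : iota n (i + j) = iota n i + iota n j := by
  unfold iota
  rw [ZMod.val_add]
  have h1 : ((2 * ((i.val + j.val) % n) : ℕ) : ZMod (2*n)) =
      ((2 * (i.val + j.val) : ℕ) : ZMod (2*n)) :=
    (ZMod.natCast_eq_natCast_iff _ _ _).mpr (Nat.ModEq.mul_left' 2 (Nat.mod_modEq _ _))
  rw [h1]
  push_cast
  ring

lemma iota_inj {i j : ZMod n} (h : iota n i = iota n j) : i = j := by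
  have h2 := congrArg ZMod.val h
  rw [iota_val, iota_val] at h2
  exact ZMod.val_injective n (by omega)

lemma iota_cast {m : ℕ} (hm : m < n) :
    iota n ((m : ℕ) : ZMod n) = ((2*m : ℕ) : ZMod (2*n)) := by
  unfold iota
  rw [ZMod.val_natCast, Nat.mod_eq_of_lt hm]

lemma iota_zero : iota n 0 = 0 := by
  unfold iota
  simp

lemma iota_zero_iff {i : ZMod n} : iota n i = 0 ↔ i = 0 := by
  constructor
  · intro h
    have h2 := congrArg ZMod.val h
    rw [iota_val, ZMod.val_zero] at h2
    exact (ZMod.val_eq_zero i).mp (by omega)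
  · rintro rfl
    exact iota_zero

lemma iota_par (i : ZMod n) : (iota n i).val % 2 = 0 := by
  rw [iota_val]; omega

lemma iota_add_cast_eq (i : ZMod n) (c : ℕ) :
    iota n i + ((c : ℕ) : ZMod (2*n)) = ((2*i.val + c : ℕ) : ZMod (2*n)) := by
  unfold iota
  push_cast
  ring

lemma iota_add_cast_par (i : ZMod n) {c : ℕ} (hc : c % 2 = 1) :
    (iota n i + ((c : ℕ) : ZMod (2*n))).val % 2 = 1 := by
  rw [iota_add_cast_eq, par_cast n]
  omega

lemma petersen_adj_cases {k : ℕ} {x y : ZMod n ⊕ ZMod n}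
    (h : (petersen n k).Adj x y)
    {P : (ZMod n ⊕ ZMod n) → (ZMod n ⊕ ZMod n) → Prop}
    (hsymm : ∀ a b, P a b → P b a)
    (houter : ∀ i : ZMod n, P (Sum.inl i) (Sum.inl (i+1)))
    (hinner : ∀ i : ZMod n, P (Sum.inr i) (Sum.inr (i + (k : ZMod n))))
    (hspoke : ∀ i : ZMod n, P (Sum.inl i) (Sum.inr i)) : P x y := by
  rw [petersen, SimpleGraph.fromRel_adj] at h
  obtain ⟨-, h | h⟩ := h
  · rcases h with ⟨i, rfl, rfl⟩ | ⟨i, rfl, rfl⟩ | ⟨i, rfl, rfl⟩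
    exacts [houter i, hinner i, hspoke i]
  · rcases h with ⟨i, rfl, rfl⟩ | ⟨i, rfl, rfl⟩ | ⟨i, rfl, rfl⟩
    exacts [hsymm _ _ (houter i), hsymm _ _ (hinner i), hsymm _ _ (hspoke i)]

end Schemes

section SchemeI

theorem schemeI (n k c : ℕ) (hn : 5 ≤ n) (hk : 2 ≤ k) (hkn : 2*k < n)
    (hc2 : c % 2 = 1) (hc3 : 3 < c) (hc4 : c < 2*n - 3)
    (h5 : c ≠ 2*k - 1) (h6 : c ≠ 2*k + 1) (h7 : c ≠ 2*n - 2*k - 1)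
    (h8 : c ≠ 2*n - 2*k + 1) :
    PotentiallyTriangulable (petersen n k) (2*n) := by
  haveI : NeZero n := ⟨by omega⟩
  haveI : NeZero (2*n) := ⟨by omega⟩
  set cc : ZMod (2*n) := ((c : ℕ) : ZMod (2*n)) with hcc
  set f : ZMod n ⊕ ZMod n → ZMod (2*n) :=
    Sum.elim (fun i => if i = 0 then 0 else iota n i + cc)
      (fun i => if i = 0 then cc else iota n i) with hf
  have hfl0 : f (Sum.inl 0) = 0 := by simp [hf]
  have hfl : ∀ i : ZMod n, i ≠ 0 → f (Sum.inl i) = iota n i + cc := by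
    intro i hi; simp [hf, hi]
  have hfr0 : f (Sum.inr 0) = cc := by simp [hf]
  have hfr : ∀ i : ZMod n, i ≠ 0 → f (Sum.inr i) = iota n i := by
    intro i hi; simp [hf, hi]
  have hccval : cc.val = c := val_cast_lt (by omega)
  have hccpar : cc.val % 2 = 1 := by rw [hccval]; omega
  have hone_n : (1 : ZMod n).val = 1 := by rw [← Nat.cast_one, val_cast_lt (by omega)]
  have honeZ : (1 : ZMod n) ≠ 0 := by
    intro h
    rw [h, ZMod.val_zero] at hone_n
    omega
  have hiota1 : iota n 1 = ((2 : ℕ) : ZMod (2*n)) := by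
    unfold iota
    rw [hone_n]
  have hkZ : ((k : ℕ) : ZMod n) ≠ 0 := by
    intro h
    have := congrArg ZMod.val h
    rw [val_cast_lt (by omega), ZMod.val_zero] at this
    omega
  have hik : iota n ((k : ℕ) : ZMod n) = ((2*k : ℕ) : ZMod (2*n)) := iota_cast (by omega)
  apply master (petersen n k) n hn f
  · -- injectivity
    intro x y hxy
    rcases x with i | i <;> rcases y with j | j
    · by_cases hi : i = 0 <;> by_cases hj : j = 0
      · rw [hi, hj]
      · exfalso
        rw [hi, hfl0, hfl j hj] at hxy
        have hp := iota_add_cast_par (n := n) j hc2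
        rw [← hxy, ZMod.val_zero] at hp
        omega
      · exfalso
        rw [hj, hfl0, hfl i hi] at hxy
        have hp := iota_add_cast_par (n := n) i hc2
        rw [hxy, ZMod.val_zero] at hp
        omega
      · rw [hfl i hi, hfl j hj] at hxy
        exact congrArg Sum.inl (iota_inj (add_right_cancel hxy))
    · exfalso
      by_cases hi : i = 0 <;> by_cases hj : j = 0
      · rw [hi, hj, hfl0, hfr0] at hxy
        rw [← hxy, ZMod.val_zero] at hccval
        omega
      · rw [hi, hfl0, hfr j hj] at hxy
        exact hj (iota_zero_iff.mp hxy.symm)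
      · rw [hj, hfl i hi, hfr0] at hxy
        rw [add_eq_right] at hxy
        exact hi (iota_zero_iff.mp hxy)
      · rw [hfl i hi, hfr j hj] at hxy
        have h1 := iota_add_cast_par (n := n) i hc2
        rw [hxy] at h1
        have h2 := iota_par (n := n) j
        omega
    · exfalso
      by_cases hi : i = 0 <;> by_cases hj : j = 0
      · rw [hi, hj, hfr0, hfl0] at hxy
        rw [hxy, ZMod.val_zero] at hccval
        omega
      · rw [hi, hfr0, hfl j hj] at hxy
        have h1 := hxy.symm
        rw [add_eq_right] at h1
        exact hj (iota_zero_iff.mp h1)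
      · rw [hj, hfr i hi, hfl0] at hxy
        exact hi (iota_zero_iff.mp hxy)
      · rw [hfr i hi, hfl j hj] at hxy
        have h1 := iota_add_cast_par (n := n) j hc2
        rw [← hxy] at h1
        have h2 := iota_par (n := n) i
        omega
    · by_cases hi : i = 0 <;> by_cases hj : j = 0
      · rw [hi, hj]
      · exfalso
        rw [hi, hfr0, hfr j hj] at hxy
        have h2 := iota_par (n := n) j
        rw [← hxy] at h2
        omega
      · exfalso
        rw [hj, hfr i hi, hfr0] at hxy
        have h2 := iota_par (n := n) i
        rw [hxy] at h2
        omega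
      · rw [hfr i hi, hfr j hj] at hxy
        exact congrArg Sum.inr (iota_inj hxy)
  · -- the Ok condition
    intro x y hadj
    refine petersen_adj_cases (P := fun a b => Ok n (f a) (f b)) hadj (fun a b h => ok_symm h) ?_ ?_ ?_
    · -- outer edges
      intro i
      by_cases hi : i = 0
      · subst hi
        simp only [zero_add]
        rw [hfl0, hfl 1 honeZ]
        refine ok_mixed (2+c) ?_ (by omega) (by omega) (by omega) ?_
        · rw [sub_zero, hiota1, hcc, ← Nat.cast_add]
        · right
          exact iota_add_cast_par 1 hc2
      · by_cases hi1 : i + 1 = 0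
        · have hieq : i = -1 := eq_neg_of_add_eq_zero_left hi1
          rw [hi1, hfl0, hfl i hi]
          have hiN : iota n i = ((2*n - 2 : ℕ) : ZMod (2*n)) := by
            rw [hieq, show (-1 : ZMod n) = ((n-1 : ℕ) : ZMod n) from by
              rw [Nat.cast_sub (by omega), ZMod.natCast_self, Nat.cast_one]; ring,
              iota_cast (by omega)]
            congr 1
            omega
          have hu : iota n i + cc = ((c - 2 : ℕ) : ZMod (2*n)) := by
            rw [hiN, hcc, ← Nat.cast_add,
              show 2*n - 2 + c = (c - 2) + 2*n from by omega,
              Nat.cast_add, ZMod.natCast_self, add_zero]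
          refine ok_mixed (2*n - (c-2)) ?_ (by omega) (by omega) (by omega) ?_
          · rw [hu, zero_sub]
            exact neg_cast_eq (by omega)
          · left
            exact iota_add_cast_par i hc2
        · rw [hfl i hi, hfl (i+1) hi1]
          refine ok_mixed 2 ?_ (by omega) (by omega) (by omega) ?_
          · rw [iota_add, hiota1]
            ring
          · left
            exact iota_add_cast_par i hc2
    · -- inner edges
      intro i
      by_cases hi : i = 0
      · subst hi
        simp only [zero_add]
        rw [hfr0, hfr _ hkZ]
        rcases Nat.lt_or_ge c (2*k) with hck | hck
        · refine ok_mixed (2*k - c) ?_ (by omega) (by omega) (by omega) ?_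
          · rw [hik, hcc, ← Nat.cast_sub (by omega)]
          · left
            exact hccpar
        · refine ok_mixed (2*k + 2*n - c) ?_ (by omega) (by omega) (by omega) ?_
          · rw [hik, hcc]
            exact (cast_wrap (2*k) c (by omega)).symm
          · left
            exact hccpar
      · by_cases hik0 : i + ((k : ℕ) : ZMod n) = 0
        · have hieq : i = -((k : ℕ) : ZMod n) := eq_neg_of_add_eq_zero_left hik0
          rw [hik0, hfr0, hfr i hi]
          have hiN : iota n i = ((2*n - 2*k : ℕ) : ZMod (2*n)) := by
            rw [hieq, show -((k : ℕ) : ZMod n) = ((n - k : ℕ) : ZMod n) from by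
              rw [Nat.cast_sub (by omega), ZMod.natCast_self]; ring,
              iota_cast (by omega)]
            congr 1
            omega
          rcases Nat.lt_or_ge c (2*n - 2*k) with hck | hck
          · refine ok_mixed (2*k + c) ?_ (by omega) (by omega) (by omega) ?_
            · rw [hiN, hcc]
              have hw := cast_wrap (N := 2*n) c (2*n - 2*k) (by omega)
              rw [show c + 2*n - (2*n - 2*k) = 2*k + c from by omega] at hw
              exact hw.symm
            · right
              exact hccpar
          · refine ok_mixed (c - (2*n - 2*k)) ?_ (by omega) (by omega) (by omega) ?_
            · rw [hiN, hcc, ← Nat.cast_sub (by omega)]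
            · right
              exact hccpar
        · rw [hfr i hi, hfr _ hik0]
          refine ok_even (2*k) ?_ (by omega) (by omega) (by omega) (by omega)
            (by omega) (by omega) ?_ ?_
          · rw [iota_add, hik]
            ring
          · exact fun h => hi (iota_zero_iff.mp h)
          · exact fun h => hik0 (iota_zero_iff.mp h)
    · -- spokes
      intro i
      by_cases hi : i = 0
      · subst hi
        rw [hfl0, hfr0]
        refine ok_mixed c ?_ (by omega) (by omega) (by omega) ?_
        · rw [sub_zero, hcc]
        · right
          exact hccpar
      · rw [hfl i hi, hfr i hi]
        refine ok_mixed (2*n - c) ?_ (by omega) (by omega) (by omega) ?_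
        · rw [show iota n i - (iota n i + cc) = -cc from by ring, hcc]
          exact neg_cast_eq (by omega)
        · left
          exact iota_add_cast_par i hc2

end SchemeI


section SchemeII

theorem schemeII (n : ℕ) (hn : 5 ≤ n) (hev : n % 2 = 0) :
    PotentiallyTriangulable (petersen n 1) (2*n) := by
  haveI : NeZero n := ⟨by omega⟩
  haveI : NeZero (2*n) := ⟨by omega⟩
  set cc : ZMod (2*n) := ((5 : ℕ) : ZMod (2*n)) with hcc
  set f : ZMod n ⊕ ZMod n → ZMod (2*n) :=
    Sum.elim (fun i => if i.val % 2 = 1 then iota n i + cc else iota n i)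
      (fun i => if i.val % 2 = 0 then iota n i + cc else iota n i) with hf
  have hfl1 : ∀ i : ZMod n, i.val % 2 = 1 → f (Sum.inl i) = iota n i + cc := by
    intro i hi
    simp only [hf, Sum.elim_inl]
    rw [if_pos hi]
  have hfl0 : ∀ i : ZMod n, i.val % 2 = 0 → f (Sum.inl i) = iota n i := by
    intro i hi
    simp only [hf, Sum.elim_inl]
    rw [if_neg (by omega)]
  have hfrE : ∀ i : ZMod n, i.val % 2 = 0 → f (Sum.inr i) = iota n i + cc := by
    intro i hi
    simp only [hf, Sum.elim_inr]
    rw [if_pos hi]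
  have hfrO : ∀ i : ZMod n, i.val % 2 = 1 → f (Sum.inr i) = iota n i := by
    intro i hi
    simp only [hf, Sum.elim_inr]
    rw [if_neg (by omega)]
  have hccpar : cc.val % 2 = 1 := by rw [hcc, par_cast n]
  have hone_n : (1 : ZMod n).val = 1 := by rw [← Nat.cast_one, val_cast_lt (by omega)]
  have hiota1 : iota n 1 = ((2 : ℕ) : ZMod (2*n)) := by
    unfold iota
    rw [hone_n]
  have hval_add1 : ∀ i : ZMod n, (i+1).val % 2 = (i.val + 1) % 2 := by
    intro i
    have h1 : (i+1).val = (i.val + 1) % n := by rw [ZMod.val_add, hone_n]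
    have h2 := ZMod.val_lt i
    rcases Nat.lt_or_ge (i.val + 1) n with h | h
    · rw [h1, Nat.mod_eq_of_lt h]
    · have h3 : i.val + 1 = n := by omega
      rw [h1, h3, Nat.mod_self]
      omega
  have hpar_cc : ∀ i : ZMod n, (iota n i + cc).val % 2 = 1 := by
    intro i
    rw [hcc]
    exact iota_add_cast_par i (by norm_num)
  apply master (petersen n 1) n hn f
  · -- injectivity
    intro x y hxy
    rcases x with i | i <;> rcases y with j | j
    · by_cases hi : i.val % 2 = 1 <;> by_cases hj : j.val % 2 = 1
      · rw [hfl1 i hi, hfl1 j hj] at hxy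
        exact congrArg Sum.inl (iota_inj (add_right_cancel hxy))
      · exfalso
        rw [hfl1 i hi, hfl0 j (by omega)] at hxy
        have p := hpar_cc i
        rw [hxy] at p
        have p2 := iota_par (n := n) j
        omega
      · exfalso
        rw [hfl0 i (by omega), hfl1 j hj] at hxy
        have p := hpar_cc j
        rw [← hxy] at p
        have p2 := iota_par (n := n) i
        omega
      · rw [hfl0 i (by omega), hfl0 j (by omega)] at hxy
        exact congrArg Sum.inl (iota_inj hxy)
    · exfalso
      by_cases hi : i.val % 2 = 1 <;> by_cases hj : j.val % 2 = 1
      · rw [hfl1 i hi, hfrO j hj] at hxy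
        have p := hpar_cc i
        rw [hxy] at p
        have p2 := iota_par (n := n) j
        omega
      · rw [hfl1 i hi, hfrE j (by omega)] at hxy
        have hij := iota_inj (add_right_cancel hxy)
        rw [hij] at hi
        omega
      · rw [hfl0 i (by omega), hfrO j hj] at hxy
        have hij := iota_inj hxy
        rw [hij] at hi
        exact hi hj
      · rw [hfl0 i (by omega), hfrE j (by omega)] at hxy
        have p := hpar_cc j
        rw [← hxy] at p
        have p2 := iota_par (n := n) i
        omega
    · exfalso
      by_cases hi : i.val % 2 = 1 <;> by_cases hj : j.val % 2 = 1
      · rw [hfrO i hi, hfl1 j hj] at hxy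
        have p := hpar_cc j
        rw [← hxy] at p
        have p2 := iota_par (n := n) i
        omega
      · rw [hfrO i hi, hfl0 j (by omega)] at hxy
        have hij := iota_inj hxy
        rw [hij] at hi
        omega
      · rw [hfrE i (by omega), hfl1 j hj] at hxy
        have hij := iota_inj (add_right_cancel hxy)
        rw [hij] at hi
        omega
      · rw [hfrE i (by omega), hfl0 j (by omega)] at hxy
        have p := hpar_cc i
        rw [hxy] at p
        have p2 := iota_par (n := n) j
        omega
    · by_cases hi : i.val % 2 = 1 <;> by_cases hj : j.val % 2 = 1
      · rw [hfrO i hi, hfrO j hj] at hxy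
        exact congrArg Sum.inr (iota_inj hxy)
      · exfalso
        rw [hfrO i hi, hfrE j (by omega)] at hxy
        have p := hpar_cc j
        rw [← hxy] at p
        have p2 := iota_par (n := n) i
        omega
      · exfalso
        rw [hfrE i (by omega), hfrO j hj] at hxy
        have p := hpar_cc i
        rw [hxy] at p
        have p2 := iota_par (n := n) j
        omega
      · rw [hfrE i (by omega), hfrE j (by omega)] at hxy
        exact congrArg Sum.inr (iota_inj (add_right_cancel hxy))
  · -- the Ok condition
    intro x y hadj
    refine petersen_adj_cases (P := fun a b => Ok n (f a) (f b)) hadj (fun a b h => ok_symm h) ?_ ?_ ?_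
    · intro i
      by_cases hi : i.val % 2 = 1
      · have hj : (i+1).val % 2 = 0 := by have := hval_add1 i; omega
        rw [hfl1 i hi, hfl0 (i+1) hj]
        refine ok_mixed (2*n - 3) ?_ (by omega) (by omega) (by omega) ?_
        · rw [show iota n (i+1) - (iota n i + cc) = iota n 1 - cc from by
            rw [iota_add]; ring, hiota1, hcc]
          have hw := cast_wrap (N := 2*n) 2 5 (by omega)
          rw [show 2 + 2*n - 5 = 2*n - 3 from by omega] at hw
          exact hw.symm
        · left
          exact hpar_cc i
      · have hi0 : i.val % 2 = 0 := by omega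
        have hj : (i+1).val % 2 = 1 := by have := hval_add1 i; omega
        rw [hfl0 i hi0, hfl1 (i+1) hj]
        refine ok_mixed 7 ?_ (by omega) (by omega) (by omega) ?_
        · rw [show iota n (i+1) + cc - iota n i = iota n 1 + cc from by
            rw [iota_add]; ring, hiota1, hcc, ← Nat.cast_add]
        · right
          exact hpar_cc (i+1)
    · intro i
      simp only [Nat.cast_one]
      by_cases hi : i.val % 2 = 1
      · have hj : (i+1).val % 2 = 0 := by have := hval_add1 i; omega
        rw [hfrO i hi, hfrE (i+1) hj]
        refine ok_mixed 7 ?_ (by omega) (by omega) (by omega) ?_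
        · rw [show iota n (i+1) + cc - iota n i = iota n 1 + cc from by
            rw [iota_add]; ring, hiota1, hcc, ← Nat.cast_add]
        · right
          exact hpar_cc (i+1)
      · have hi0 : i.val % 2 = 0 := by omega
        have hj : (i+1).val % 2 = 1 := by have := hval_add1 i; omega
        rw [hfrE i hi0, hfrO (i+1) hj]
        refine ok_mixed (2*n - 3) ?_ (by omega) (by omega) (by omega) ?_
        · rw [show iota n (i+1) - (iota n i + cc) = iota n 1 - cc from by
            rw [iota_add]; ring, hiota1, hcc]
          have hw := cast_wrap (N := 2*n) 2 5 (by omega)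
          rw [show 2 + 2*n - 5 = 2*n - 3 from by omega] at hw
          exact hw.symm
        · left
          exact hpar_cc i
    · intro i
      by_cases hi : i.val % 2 = 1
      · rw [hfl1 i hi, hfrO i hi]
        refine ok_mixed (2*n - 5) ?_ (by omega) (by omega) (by omega) ?_
        · rw [show iota n i - (iota n i + cc) = -cc from by ring, hcc]
          exact neg_cast_eq (by omega)
        · left
          exact hpar_cc i
      · have hi0 : i.val % 2 = 0 := by omega
        rw [hfl0 i hi0, hfrE i hi0]
        refine ok_mixed 5 ?_ (by omega) (by omega) (by omega) ?_
        · rw [show iota n i + cc - iota n i = cc from by ring, hcc]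
        · right
          exact hpar_cc i

end SchemeII

section SchemeIII

theorem schemeIII (n : ℕ) (hn : 7 ≤ n) (hod : n % 2 = 1) :
    PotentiallyTriangulable (petersen n 1) (2*n) := by
  haveI : NeZero n := ⟨by omega⟩
  haveI : NeZero (2*n) := ⟨by omega⟩
  set cc : ZMod (2*n) := ((5 : ℕ) : ZMod (2*n)) with hcc
  set f : ZMod n ⊕ ZMod n → ZMod (2*n) :=
    Sum.elim
      (fun i => if i.val % 2 = 1 then (if i = 1 then 0 else iota n i) else iota n i + cc)
      (fun i => if i.val % 2 = 0 then (if i = 0 then iota n 1 else iota n i) else iota n i + cc)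
    with hf
  have hone_n : (1 : ZMod n).val = 1 := by rw [← Nat.cast_one, val_cast_lt (by omega)]
  have honeZ : (1 : ZMod n) ≠ 0 := by
    intro h
    rw [h, ZMod.val_zero] at hone_n
    omega
  have h1par : (1 : ZMod n).val % 2 = 1 := by rw [hone_n]
  have h0par : (0 : ZMod n).val % 2 = 0 := by rw [ZMod.val_zero]
  have hfa1 : f (Sum.inl 1) = 0 := by
    simp only [hf, Sum.elim_inl]
    rw [if_pos h1par]
    simp
  have hfaO : ∀ i : ZMod n, i.val % 2 = 1 → i ≠ 1 → f (Sum.inl i) = iota n i := by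
    intro i h1 h2
    simp only [hf, Sum.elim_inl]
    rw [if_pos h1, if_neg h2]
  have hfaE : ∀ i : ZMod n, i.val % 2 = 0 → f (Sum.inl i) = iota n i + cc := by
    intro i h1
    simp only [hf, Sum.elim_inl]
    rw [if_neg (by omega)]
  have hfb0 : f (Sum.inr 0) = iota n 1 := by
    simp only [hf, Sum.elim_inr]
    rw [if_pos h0par]
    simp
  have hfbE : ∀ i : ZMod n, i.val % 2 = 0 → i ≠ 0 → f (Sum.inr i) = iota n i := by
    intro i h1 h2
    simp only [hf, Sum.elim_inr]
    rw [if_pos h1, if_neg h2]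
  have hfbO : ∀ i : ZMod n, i.val % 2 = 1 → f (Sum.inr i) = iota n i + cc := by
    intro i h1
    simp only [hf, Sum.elim_inr]
    rw [if_neg (by omega)]
  have hccpar : cc.val % 2 = 1 := by rw [hcc, par_cast n]
  have hiota1 : iota n 1 = ((2 : ℕ) : ZMod (2*n)) := by
    unfold iota
    rw [hone_n]
  have hneg1cast : (-1 : ZMod n) = ((n-1 : ℕ) : ZMod n) := by
    rw [Nat.cast_sub (by omega), ZMod.natCast_self, Nat.cast_one]
    ring
  have hneg1val : (-1 : ZMod n).val = n - 1 := by
    rw [hneg1cast, val_cast_lt (by omega)]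
  have hneg1par : (-1 : ZMod n).val % 2 = 0 := by rw [hneg1val]; omega
  have hneg1ne : (-1 : ZMod n) ≠ 0 := by
    intro h
    rw [h, ZMod.val_zero] at hneg1val
    omega
  have hvflip : ∀ i : ZMod n, i ≠ -1 → (i+1).val = i.val + 1 := by
    intro i hi
    have h1 : (i+1).val = (i.val + 1) % n := by rw [ZMod.val_add, hone_n]
    have h2 := ZMod.val_lt i
    rcases Nat.lt_or_ge (i.val + 1) n with h | h
    · rw [h1, Nat.mod_eq_of_lt h]
    · exfalso
      apply hi
      apply ZMod.val_injective
      rw [hneg1val]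
      omega
  have hone_ne_neg1 : (1 : ZMod n) ≠ -1 := by
    intro h
    rw [h, hneg1val] at hone_n
    omega
  have hi2val : ((1 : ZMod n) + 1).val = 2 := by
    rw [hvflip 1 hone_ne_neg1, hone_n]
  have hiota2 : iota n (1+1) = ((4 : ℕ) : ZMod (2*n)) := by
    unfold iota
    rw [hi2val]
  have hiotaN1 : iota n (-1) = ((2*n - 2 : ℕ) : ZMod (2*n)) := by
    rw [hneg1cast, iota_cast (by omega)]
    congr 1
    omega
  have hpar_cc : ∀ i : ZMod n, (iota n i + cc).val % 2 = 1 := by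
    intro i
    rw [hcc]
    exact iota_add_cast_par i (by norm_num)
  apply master (petersen n 1) n (by omega) f
  · -- injectivity
    intro x y hxy
    rcases x with i | i <;> rcases y with j | j
    · by_cases hi : i.val % 2 = 1 <;> by_cases hj : j.val % 2 = 1
      · by_cases hi1 : i = 1 <;> by_cases hj1 : j = 1
        · rw [hi1, hj1]
        · exfalso
          rw [hi1, hfa1, hfaO j hj hj1] at hxy
          have hj0 := iota_zero_iff.mp hxy.symm
          rw [hj0, ZMod.val_zero] at hj
          omega
        · exfalso
          rw [hj1, hfa1, hfaO i hi hi1] at hxy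
          have hi0 := iota_zero_iff.mp hxy
          rw [hi0, ZMod.val_zero] at hi
          omega
        · rw [hfaO i hi hi1, hfaO j hj hj1] at hxy
          exact congrArg Sum.inl (iota_inj hxy)
      · exfalso
        have p := hpar_cc j
        rw [← hfaE j (by omega), ← hxy] at p
        by_cases hi1 : i = 1
        · rw [hi1, hfa1, ZMod.val_zero] at p
          omega
        · rw [hfaO i hi hi1] at p
          have p2 := iota_par (n := n) i
          omega
      · exfalso
        have p := hpar_cc i
        rw [← hfaE i (by omega), hxy] at p
        by_cases hj1 : j = 1
        · rw [hj1, hfa1, ZMod.val_zero] at p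
          omega
        · rw [hfaO j hj hj1] at p
          have p2 := iota_par (n := n) j
          omega
      · rw [hfaE i (by omega), hfaE j (by omega)] at hxy
        exact congrArg Sum.inl (iota_inj (add_right_cancel hxy))
    · exfalso
      by_cases hi : i.val % 2 = 1 <;> by_cases hj : j.val % 2 = 0
      · by_cases hi1 : i = 1 <;> by_cases hj0 : j = 0
        · rw [hi1, hfa1, hj0, hfb0] at hxy
          exact honeZ (iota_zero_iff.mp hxy.symm)
        · rw [hi1, hfa1, hfbE j hj hj0] at hxy
          exact hj0 (iota_zero_iff.mp hxy.symm)
        · rw [hfaO i hi hi1, hj0, hfb0] at hxy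
          exact hi1 (iota_inj hxy)
        · rw [hfaO i hi hi1, hfbE j hj hj0] at hxy
          have hij := iota_inj hxy
          rw [hij] at hi
          omega
      · have hj1 : j.val % 2 = 1 := by omega
        have p := hpar_cc j
        rw [← hfbO j hj1, ← hxy] at p
        by_cases hi1 : i = 1
        · rw [hi1, hfa1, ZMod.val_zero] at p
          omega
        · rw [hfaO i hi hi1] at p
          have p2 := iota_par (n := n) i
          omega
      · have p := hpar_cc i
        rw [← hfaE i (by omega), hxy] at p
        by_cases hj0 : j = 0
        · rw [hj0, hfb0] at p
          have p2 := iota_par (n := n) 1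
          omega
        · rw [hfbE j hj hj0] at p
          have p2 := iota_par (n := n) j
          omega
      · have hj1 : j.val % 2 = 1 := by omega
        rw [hfaE i (by omega), hfbO j hj1] at hxy
        have hij := iota_inj (add_right_cancel hxy)
        rw [hij] at hi
        omega
    · exfalso
      by_cases hi : i.val % 2 = 0 <;> by_cases hj : j.val % 2 = 1
      · by_cases hi0 : i = 0 <;> by_cases hj1 : j = 1
        · rw [hi0, hfb0, hj1, hfa1] at hxy
          exact honeZ (iota_zero_iff.mp hxy)
        · rw [hi0, hfb0, hfaO j hj hj1] at hxy
          exact hj1 (iota_inj hxy).symm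
        · rw [hj1, hfa1, hfbE i hi hi0] at hxy
          exact hi0 (iota_zero_iff.mp hxy)
        · rw [hfbE i hi hi0, hfaO j hj hj1] at hxy
          have hij := iota_inj hxy
          rw [hij] at hi
          omega
      · have hj0 : j.val % 2 = 0 := by omega
        have p := hpar_cc j
        rw [← hfaE j hj0, ← hxy] at p
        by_cases hi0 : i = 0
        · rw [hi0, hfb0] at p
          have p2 := iota_par (n := n) 1
          omega
        · rw [hfbE i hi hi0] at p
          have p2 := iota_par (n := n) i
          omega
      · have hi1 : i.val % 2 = 1 := by omega
        have p := hpar_cc i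
        rw [← hfbO i hi1, hxy] at p
        by_cases hj1 : j = 1
        · rw [hj1, hfa1, ZMod.val_zero] at p
          omega
        · rw [hfaO j hj hj1] at p
          have p2 := iota_par (n := n) j
          omega
      · have hi1 : i.val % 2 = 1 := by omega
        have hj0 : j.val % 2 = 0 := by omega
        rw [hfbO i hi1, hfaE j hj0] at hxy
        have hij := iota_inj (add_right_cancel hxy)
        rw [hij] at hi1
        omega
    · by_cases hi : i.val % 2 = 0 <;> by_cases hj : j.val % 2 = 0
      · by_cases hi0 : i = 0 <;> by_cases hj0 : j = 0
        · rw [hi0, hj0]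
        · exfalso
          rw [hi0, hfb0, hfbE j hj hj0] at hxy
          have hij := iota_inj hxy
          rw [← hij, hone_n] at hj
          omega
        · exfalso
          rw [hj0, hfb0, hfbE i hi hi0] at hxy
          have hij := iota_inj hxy
          rw [hij, hone_n] at hi
          omega
        · rw [hfbE i hi hi0, hfbE j hj hj0] at hxy
          exact congrArg Sum.inr (iota_inj hxy)
      · exfalso
        have hj1 : j.val % 2 = 1 := by omega
        have p := hpar_cc j
        rw [← hfbO j hj1, ← hxy] at p
        by_cases hi0 : i = 0
        · rw [hi0, hfb0] at p
          have p2 := iota_par (n := n) 1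
          omega
        · rw [hfbE i hi hi0] at p
          have p2 := iota_par (n := n) i
          omega
      · exfalso
        have hi1 : i.val % 2 = 1 := by omega
        have p := hpar_cc i
        rw [← hfbO i hi1, hxy] at p
        by_cases hj0 : j = 0
        · rw [hj0, hfb0] at p
          have p2 := iota_par (n := n) 1
          omega
        · rw [hfbE j hj hj0] at p
          have p2 := iota_par (n := n) j
          omega
      · have hi1 : i.val % 2 = 1 := by omega
        have hj1 : j.val % 2 = 1 := by omega
        rw [hfbO i hi1, hfbO j hj1] at hxy
        exact congrArg Sum.inr (iota_inj (add_right_cancel hxy))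
  · -- the Ok condition
    intro x y hadj
    refine petersen_adj_cases (P := fun a b => Ok n (f a) (f b)) hadj
      (fun a b h => ok_symm h) ?_ ?_ ?_
    · -- outer edges
      intro i
      by_cases h0 : i = 0
      · subst h0
        simp only [zero_add]
        rw [hfaE 0 h0par, hfa1, iota_zero, zero_add]
        refine ok_mixed (2*n - 5) ?_ (by omega) (by omega) (by omega) ?_
        · rw [zero_sub, hcc]
          exact neg_cast_eq (by omega)
        · left
          exact hccpar
      · by_cases h1 : i = 1
        · subst h1
          rw [hfa1, hfaE (1+1) (by rw [hi2val])]
          refine ok_mixed 9 ?_ (by omega) (by omega) (by omega) ?_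
          · rw [sub_zero, hiota2, hcc, ← Nat.cast_add]
          · right
            exact hpar_cc (1+1)
        · by_cases hm1 : i = -1
          · subst hm1
            rw [hfaE (-1) hneg1par, neg_add_cancel, hfaE 0 h0par, iota_zero, zero_add]
            refine ok_mixed 2 ?_ (by omega) (by omega) (by omega) ?_
            · rw [show cc - (iota n (-1) + cc) = -(iota n (-1)) from by ring, hiotaN1]
              have hw := neg_cast_eq (N := 2*n) (m := 2*n - 2) (by omega)
              rw [show 2*n - (2*n - 2) = 2 from by omega] at hw
              exact hw
            · left
              exact hpar_cc (-1)
          · by_cases hpar : i.val % 2 = 1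
            · have hj : (i+1).val % 2 = 0 := by rw [hvflip i hm1]; omega
              rw [hfaO i hpar h1, hfaE (i+1) hj]
              refine ok_mixed 7 ?_ (by omega) (by omega) (by omega) ?_
              · rw [show iota n (i+1) + cc - iota n i = iota n 1 + cc from by
                  rw [iota_add]; ring, hiota1, hcc, ← Nat.cast_add]
              · right
                exact hpar_cc (i+1)
            · have hpar0 : i.val % 2 = 0 := by omega
              have hj : (i+1).val % 2 = 1 := by rw [hvflip i hm1]; omega
              have hne1 : i + 1 ≠ 1 := by
                intro h
                apply h0
                have h' : i + 1 = 0 + 1 := by rw [zero_add]; exact h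
                exact add_right_cancel h'
              rw [hfaE i hpar0, hfaO (i+1) hj hne1]
              refine ok_mixed (2*n - 3) ?_ (by omega) (by omega) (by omega) ?_
              · rw [show iota n (i+1) - (iota n i + cc) = iota n 1 - cc from by
                  rw [iota_add]; ring, hiota1, hcc]
                have hw := cast_wrap (N := 2*n) 2 5 (by omega)
                rw [show 2 + 2*n - 5 = 2*n - 3 from by omega] at hw
                exact hw.symm
              · left
                exact hpar_cc i
    · -- inner edges
      intro i
      simp only [Nat.cast_one]
      by_cases h0 : i = 0
      · subst h0
        simp only [zero_add]
        rw [hfb0, hfbO 1 h1par]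
        refine ok_mixed 5 ?_ (by omega) (by omega) (by omega) ?_
        · rw [show iota n 1 + cc - iota n 1 = cc from by ring, hcc]
        · right
          exact hpar_cc 1
      · by_cases hm1 : i = -1
        · subst hm1
          rw [hfbE (-1) hneg1par hneg1ne, neg_add_cancel, hfb0]
          refine ok_even 4 ?_ (by omega) (by omega) (by omega) (by omega)
            (by omega) (by omega) ?_ ?_
          · rw [hiota1, hiotaN1]
            have hw := cast_wrap (N := 2*n) 2 (2*n - 2) (by omega)
            rw [show 2 + 2*n - (2*n - 2) = 4 from by omega] at hw
            exact hw.symm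
          · rw [hiotaN1]
            exact cast_ne_zero_of (by omega) (by omega)
          · rw [hiota1]
            exact cast_ne_zero_of (by omega) (by omega)
        · by_cases hpar : i.val % 2 = 1
          · have hj : (i+1).val % 2 = 0 := by rw [hvflip i hm1]; omega
            have hjne : i + 1 ≠ 0 := by
              intro h
              exact hm1 (eq_neg_of_add_eq_zero_left h)
            rw [hfbO i hpar, hfbE (i+1) hj hjne]
            refine ok_mixed (2*n - 3) ?_ (by omega) (by omega) (by omega) ?_
            · rw [show iota n (i+1) - (iota n i + cc) = iota n 1 - cc from by
                rw [iota_add]; ring, hiota1, hcc]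
              have hw := cast_wrap (N := 2*n) 2 5 (by omega)
              rw [show 2 + 2*n - 5 = 2*n - 3 from by omega] at hw
              exact hw.symm
            · left
              exact hpar_cc i
          · have hpar0 : i.val % 2 = 0 := by omega
            have hj : (i+1).val % 2 = 1 := by rw [hvflip i hm1]; omega
            rw [hfbE i hpar0 h0, hfbO (i+1) hj]
            refine ok_mixed 7 ?_ (by omega) (by omega) (by omega) ?_
            · rw [show iota n (i+1) + cc - iota n i = iota n 1 + cc from by
                rw [iota_add]; ring, hiota1, hcc, ← Nat.cast_add]
            · right
              exact hpar_cc (i+1)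
    · -- spokes
      intro i
      by_cases h0 : i = 0
      · subst h0
        rw [hfaE 0 h0par, hfb0, iota_zero, zero_add]
        refine ok_mixed (2*n - 3) ?_ (by omega) (by omega) (by omega) ?_
        · rw [hiota1, hcc]
          have hw := cast_wrap (N := 2*n) 2 5 (by omega)
          rw [show 2 + 2*n - 5 = 2*n - 3 from by omega] at hw
          exact hw.symm
        · left
          exact hccpar
      · by_cases h1 : i = 1
        · subst h1
          rw [hfa1, hfbO 1 h1par]
          refine ok_mixed 7 ?_ (by omega) (by omega) (by omega) ?_
          · rw [sub_zero, hiota1, hcc, ← Nat.cast_add]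
          · right
            exact hpar_cc 1
        · by_cases hpar : i.val % 2 = 1
          · rw [hfaO i hpar h1, hfbO i hpar]
            refine ok_mixed 5 ?_ (by omega) (by omega) (by omega) ?_
            · rw [show iota n i + cc - iota n i = cc from by ring, hcc]
            · right
              exact hpar_cc i
          · have hpar0 : i.val % 2 = 0 := by omega
            rw [hfaE i hpar0, hfbE i hpar0 h0]
            refine ok_mixed (2*n - 5) ?_ (by omega) (by omega) (by omega) ?_
            · rw [show iota n i - (iota n i + cc) = -cc from by ring, hcc]
              exact neg_cast_eq (by omega)
            · left
              exact hpar_cc i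

end SchemeIII


section Specials

/-- Table-based placement for the finitely many exceptional cases. -/
def tbl (n : ℕ) (l : List ℕ) [NeZero n] (i : ZMod n) : ZMod (2*n) :=
  ((l.getD i.val 0 : ℕ) : ZMod (2*n))

theorem special52 : PotentiallyTriangulable (petersen 5 2) (2*5) := by
  apply master (petersen 5 2) 5 (by norm_num)
    (Sum.elim (tbl 5 [6,1,5,0,3]) (tbl 5 [9,4,2,7,8]))
  · decide
  · decide

theorem special62 : PotentiallyTriangulable (petersen 6 2) (2*6) := by
  apply master (petersen 6 2) 6 (by norm_num)
    (Sum.elim (tbl 6 [6,3,0,7,10,1]) (tbl 6 [2,8,9,11,5,4]))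
  · decide
  · decide

theorem special73 : PotentiallyTriangulable (petersen 7 3) (2*7) := by
  apply master (petersen 7 3) 7 (by norm_num)
    (Sum.elim (tbl 7 [1,8,12,6,13,9,5]) (tbl 7 [4,3,7,11,10,0,2]))
  · decide
  · decide

theorem special83 : PotentiallyTriangulable (petersen 8 3) (2*8) := by
  apply master (petersen 8 3) 8 (by norm_num)
    (Sum.elim (tbl 8 [12,15,2,10,3,13,6,1]) (tbl 8 [4,9,5,7,0,8,14,11]))
  · decide
  · decide

/-- The triangulation used for `P(5,1)` in `K₁₀`. -/
def T51 : Finset (Sym2 (ZMod (2*5))) :=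
  {s((0 : ZMod (2*5)), 7), s((1 : ZMod (2*5)), 7), s((2 : ZMod (2*5)), 4),
   s((2 : ZMod (2*5)), 6), s((2 : ZMod (2*5)), 7), s((4 : ZMod (2*5)), 6),
   s((7 : ZMod (2*5)), 9)}

theorem special51 : PotentiallyTriangulable (petersen 5 1) (2*5) := by
  apply master0 (petersen 5 1) (2*5)
    (Sum.elim (tbl 5 [4,0,6,3,7]) (tbl 5 [8,2,9,1,5])) ?_ T51 ?_ ?_ ?_ ?_ ?_
  · decide
  · decide
  · decide
  · intro e he g hg
    fin_cases he <;> fin_cases hg <;> (rw [cross_iff]; decide)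
  · decide
  · decide

end Specials

/-- For `n ≥ 5` and `1 ≤ k < n/2`, the generalized Petersen graph `P(n, k)` is
potentially triangulable in the convex complete graph `K_{2n}`. -/
theorem stmt10 (n k : ℕ) (hn : 5 ≤ n) (hk1 : 1 ≤ k) (hk2 : 2 * k < n) :
    PotentiallyTriangulable (petersen n k) (2 * n) := by
  rcases eq_or_ne k 1 with rfl | hk1'
  · rcases Nat.mod_two_eq_zero_or_one n with he | ho
    · exact schemeII n hn he
    · rcases eq_or_ne n 5 with rfl | h5
      · exact special51
      · exact schemeIII n (by omega) ho
  · have hk2' : 2 ≤ k := by omega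
    rcases Nat.lt_or_ge k 4 with hk4 | hk4
    · have hk23 : k = 2 ∨ k = 3 := by omega
      rcases hk23 with rfl | rfl
      · rcases eq_or_ne n 5 with rfl | h5
        · exact special52
        · rcases eq_or_ne n 6 with rfl | h6
          · exact special62
          · exact schemeI n 2 7 (by omega) (by omega) (by omega) (by omega)
              (by omega) (by omega) (by omega) (by omega) (by omega) (by omega)
      · rcases eq_or_ne n 7 with rfl | h7
        · exact special73
        · rcases eq_or_ne n 8 with rfl | h8
          · exact special83
          · exact schemeI n 3 9 (by omega) (by omega) (by omega) (by omega)
              (by omega) (by omega) (by omega) (by omega) (by omega) (by omega)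
    · exact schemeI n k 5 hn hk2' hk2 (by omega) (by omega) (by omega)
        (by omega) (by omega) (by omega) (by omega)

end ConvexTri
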